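/- If the set function f : 2^V → ℝ≥0 is monotone and (γ,β)-weakly submodular for some γ ∈ (0,1] and β ≥ 1, then for every feasible subset S ⊆ V and every point x = (p_1,…,p_K) ∈ ∏_{k=1}^K Δ_{n_k}, one has γ²·f(S) − (β(1−γ) + γ²)·F(x) ≤ ⟨ Σ_{k=1}^K (1/B_k)·1_{S∩V_k}, ∇F(x) ⟩. -/

import Mathlib

open Finset

noncomputable section

namespace Multinoulli

variable {K : ℕ}

/-- An element of the ground set `V`: a community index `k` together with the
index `m` of the element `v_k^m` inside its community `V_k`. -/
abbrev Elem (n : Fin K → ℕ) := Σ k : Fin K, Fin (n k)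

/-- A sampling slot: a community `k` together with a trial index `b ∈ {1,…,B_k}`. -/
abbrev Slot (B : Fin K → ℕ) := Σ k : Fin K, Fin (B k)

/-- A joint outcome of all the independent multinoulli trials; `none` encodes a
draw of `∅`, which contributes no element. -/
abbrev Choice (n B : Fin K → ℕ) := ∀ s : Slot B, Option (Fin (n s.1))

/-- The probability that `Multi(p_k)` (the `k`-th block of `x`) assigns to a given
outcome: `x ⟨k,m⟩` for the element `v_k^m` and `1 - Σ_m x ⟨k,m⟩` for `∅`. -/
def prob (n : Fin K → ℕ) (x : Elem n → ℝ) (k : Fin K) : Option (Fin (n k)) → ℝ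
  | some m => x ⟨k, m⟩
  | none => 1 - ∑ m : Fin (n k), x ⟨k, m⟩

/-- The probability of the joint outcome `e` (all trials are mutually independent). -/
def jointProb (n B : Fin K → ℕ) (x : Elem n → ℝ) (e : Choice n B) : ℝ :=
  ∏ s : Slot B, prob n x s.1 (e s)

/-- The subset of the ground set selected by the trials whose slot lies in `A`
(a draw of `∅` contributes no element to the union). -/
def chosen (n B : Fin K → ℕ) (e : Choice n B) (A : Finset (Slot B)) : Finset (Elem n) :=
  A.biUnion fun s => ((e s).map fun m => (⟨s.1, m⟩ : Elem n)).toFinset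

/-- The Multinoulli Extension `F` of the set function `f`:
`F(x) = E[f(∪_{k,b} {e_k^b})]` for mutually independent `e_k^b ∼ Multi(p_k)`. -/
def ME (n B : Fin K → ℕ) (f : Finset (Elem n) → ℝ) (x : Elem n → ℝ) : ℝ :=
  ∑ e : Choice n B, f (chosen n B e Finset.univ) * jointProb n B x e

/-- The first-order partial derivative `∂G/∂x_i` at `x`. -/
def pderiv (n : Fin K → ℕ) (G : (Elem n → ℝ) → ℝ) (i : Elem n) (x : Elem n → ℝ) : ℝ :=
  deriv (fun t => G (Function.update x i t)) (x i)

/-- The gradient `∇G(x)`. -/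
def grad (n : Fin K → ℕ) (G : (Elem n → ℝ) → ℝ) (x : Elem n → ℝ) : Elem n → ℝ :=
  fun i => pderiv n G i x

/-- The second-order partial derivative `∂²G/∂x_i∂x_j` at `x`. -/
def pderiv2 (n : Fin K → ℕ) (G : (Elem n → ℝ) → ℝ) (i j : Elem n) (x : Elem n → ℝ) : ℝ :=
  pderiv n (fun y => pderiv n G j y) i x

/-- The Euclidean inner product on `∏_k ℝ^{n_k}`. -/
def inner' (n : Fin K → ℕ) (u v : Elem n → ℝ) : ℝ := ∑ i : Elem n, u i * v i

/-- Membership in the product of simplices `∏_{k=1}^K Δ_{n_k}`. -/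
def InSimplex (n : Fin K → ℕ) (x : Elem n → ℝ) : Prop :=
  (∀ i, 0 ≤ x i) ∧ ∀ k : Fin K, ∑ m : Fin (n k), x ⟨k, m⟩ ≤ 1

/-- Feasibility for the partition constraint: `|S ∩ V_k| ≤ B_k` for all `k`. -/
def Feasible (n B : Fin K → ℕ) (S : Finset (Elem n)) : Prop :=
  ∀ k : Fin K, (S.filter fun i => i.1 = k).card ≤ B k

/-- Monotonicity of a set function. -/
def MonotoneSet (n : Fin K → ℕ) (f : Finset (Elem n) → ℝ) : Prop :=
  ∀ A B : Finset (Elem n), A ⊆ B → f A ≤ f B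

/-- The marginal contribution `f(v|A) = f(A ∪ {v}) - f(A)`. -/
def marg (n : Fin K → ℕ) (f : Finset (Elem n) → ℝ) (v : Elem n) (A : Finset (Elem n)) : ℝ :=
  f (insert v A) - f A

/-- `α`-weak DR-submodularity: `f(v|A) ≥ α·f(v|B)` for all `A ⊆ B` and `v ∉ B`. -/
def WeaklyDR (n : Fin K → ℕ) (f : Finset (Elem n) → ℝ) (α : ℝ) : Prop :=
  ∀ A B : Finset (Elem n), A ⊆ B → ∀ v, v ∉ B → α * marg n f v B ≤ marg n f v A

/-- `γ`-weak submodularity from below. -/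
def WeaklyBelow (n : Fin K → ℕ) (f : Finset (Elem n) → ℝ) (γ : ℝ) : Prop :=
  ∀ A B : Finset (Elem n), A ⊆ B → γ * (f B - f A) ≤ ∑ v ∈ B \ A, marg n f v A

/-- `β`-weak submodularity from above. -/
def WeaklyAbove (n : Fin K → ℕ) (f : Finset (Elem n) → ℝ) (β : ℝ) : Prop :=
  ∀ A B : Finset (Elem n), A ⊆ B → ∑ v ∈ B \ A, marg n f v (B.erase v) ≤ β * (f B - f A)

/-- The scaled indicator vector `Σ_{k=1}^K (1/B_k)·1_{S∩V_k}`. -/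
def indVec (n B : Fin K → ℕ) (S : Finset (Elem n)) : Elem n → ℝ :=
  fun i => if i ∈ S then ((B i.1 : ℝ))⁻¹ else 0
/-! ### Auxiliary definitions -/

variable (n B : Fin K → ℕ)

/-- The slope of `prob` w.r.t. the coordinate `v`. -/
def slope (v : Elem n) (s : Slot B) : Option (Fin (n s.1)) → ℝ
  | some m' => if (⟨s.1, m'⟩ : Elem n) = v then 1 else 0
  | none => if s.1 = v.1 then -1 else 0

/-- The product of the probabilities of all slots except `s`. -/
def restProb (x : Elem n → ℝ) (s : Slot B) (e : Choice n B) : ℝ :=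
  ∏ s' ∈ univ.erase s, prob n x s'.1 (e s')

lemma sum_prob (x : Elem n → ℝ) (k : Fin K) :
    ∑ o : Option (Fin (n k)), prob n x k o = 1 := by
  rw [Fintype.sum_option]
  simp [prob]

lemma sum_jointProb (x : Elem n → ℝ) :
    ∑ e : Choice n B, jointProb n B x e = 1 := by
  have h := Finset.prod_univ_sum (fun s : Slot B => (univ : Finset (Option (Fin (n s.1)))))
    (fun s o => prob n x s.1 o)
  rw [Fintype.piFinset_univ] at h
  have h2 : ∏ s : Slot B, ∑ o : Option (Fin (n s.1)), prob n x s.1 o = 1 := by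
    rw [Finset.prod_congr rfl fun s _ => sum_prob n x s.1, Finset.prod_const_one]
  rw [h] at h2
  rw [← h2]
  rfl

lemma prob_nonneg {x : Elem n → ℝ} (hx : InSimplex n x) (k : Fin K)
    (o : Option (Fin (n k))) : 0 ≤ prob n x k o := by
  cases o with
  | none => simpa [prob] using hx.2 k
  | some m => exact hx.1 ⟨k, m⟩

lemma jointProb_nonneg {x : Elem n → ℝ} (hx : InSimplex n x) (e : Choice n B) :
    0 ≤ jointProb n B x e :=
  Finset.prod_nonneg fun s _ => prob_nonneg n hx s.1 (e s)

lemma restProb_nonneg {x : Elem n → ℝ} (hx : InSimplex n x) (s : Slot B) (e : Choice n B) :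
    0 ≤ restProb n B x s e :=
  Finset.prod_nonneg fun s' _ => prob_nonneg n hx s'.1 (e s')

/-! ### `chosen` facts -/

lemma chosen_mono (e : Choice n B) {A A' : Finset (Slot B)} (h : A ⊆ A') :
    chosen n B e A ⊆ chosen n B e A' :=
  Finset.biUnion_subset_biUnion_of_subset_left _ h

lemma chosen_update (e : Choice n B) {A : Finset (Slot B)} {s : Slot B} (h : s ∉ A)
    (o : Option (Fin (n s.1))) :
    chosen n B (Function.update e s o) A = chosen n B e A := by
  unfold chosen
  refine Finset.biUnion_congr rfl fun s' hs' => ?_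
  have hne : s' ≠ s := fun he => h (he ▸ hs')
  rw [Function.update_of_ne hne o e]

lemma chosen_split (e : Choice n B) (s : Slot B) :
    chosen n B e univ
      = ((e s).map fun m => (⟨s.1, m⟩ : Elem n)).toFinset ∪ chosen n B e (univ.erase s) := by
  conv_lhs => rw [chosen, ← Finset.insert_erase (Finset.mem_univ s), Finset.biUnion_insert]
  rfl

/-! ### Fiberwise summation over one slot -/

lemma sum_choice_fiber (s : Slot B) (c : Choice n B → ℝ) :
    ∑ e : Choice n B, c e
      = ∑ o : Option (Fin (n s.1)),
          ∑ e ∈ univ.filter (fun e : Choice n B => e s = none), c (Function.update e s o) := by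
  rw [← Finset.sum_fiberwise univ (fun e : Choice n B => e s) c]
  refine Finset.sum_congr rfl fun o _ => ?_
  refine Finset.sum_nbij' (fun e => Function.update e s none) (fun e => Function.update e s o)
    ?_ ?_ ?_ ?_ ?_
  · intro e he; simp
  · intro e he; simp
  · intro e he
    simp only [Finset.mem_filter, Finset.mem_univ, true_and] at he
    show Function.update (Function.update e s none) s o = e
    rw [Function.update_idem, ← he, Function.update_eq_self]
  · intro e he
    simp only [Finset.mem_filter, Finset.mem_univ, true_and] at he
    show Function.update (Function.update e s o) s none = e
    rw [Function.update_idem, ← he, Function.update_eq_self]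
  · intro e he
    simp only [Finset.mem_filter, Finset.mem_univ, true_and] at he
    show c e = c (Function.update (Function.update e s none) s o)
    rw [Function.update_idem, ← he, Function.update_eq_self]

/-! ### Derivative of the Multinoulli extension -/

lemma sum_indicator_eq (k : Fin K) (v : Elem n) :
    (∑ m' : Fin (n k), if (⟨k, m'⟩ : Elem n) = v then (1 : ℝ) else 0)
      = if k = v.1 then 1 else 0 := by
  obtain ⟨kv, mv⟩ := v
  by_cases h : k = kv
  · subst h
    simp only [Sigma.mk.inj_iff, heq_eq_eq, true_and]
    rw [Finset.sum_ite_eq' univ mv fun _ => (1 : ℝ)]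
    simp
  · have hne : ∀ m' : Fin (n k), (⟨k, m'⟩ : Elem n) ≠ ⟨kv, mv⟩ := fun m' hm =>
      h (congrArg Sigma.fst hm)
    simp [hne, h]

lemma hasDerivAt_prob (x : Elem n → ℝ) (v : Elem n) (k : Fin K) (o : Option (Fin (n k)))
    (t₀ : ℝ) :
    HasDerivAt (fun t => prob n (Function.update x v t) k o)
      (match o with
        | some m' => if (⟨k, m'⟩ : Elem n) = v then 1 else 0
        | none => if k = v.1 then -1 else 0) t₀ := by
  cases o with
  | some m' =>
      simp only [prob, Function.update_apply]
      by_cases h : (⟨k, m'⟩ : Elem n) = v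
      · simp only [h, if_pos rfl]
        exact hasDerivAt_id' t₀
      · simp only [if_neg h]
        exact hasDerivAt_const _ _
  | none =>
      have h1 : ∀ m' : Fin (n k), HasDerivAt (fun t => Function.update x v t ⟨k, m'⟩)
          (if (⟨k, m'⟩ : Elem n) = v then (1 : ℝ) else 0) t₀ := by
        intro m'
        simp only [Function.update_apply]
        by_cases h : (⟨k, m'⟩ : Elem n) = v
        · simp only [h, if_pos rfl]
          exact hasDerivAt_id' t₀
        · simp only [if_neg h]
          exact hasDerivAt_const _ _
      have h2 := HasDerivAt.fun_sum (u := univ) fun m' (_ : m' ∈ univ) => h1 m'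
      have h3 := (hasDerivAt_const t₀ (1 : ℝ)).sub h2
      rw [sum_indicator_eq n k v] at h3
      simp only [prob]
      convert h3 using 1
      · rfl
      · rfl
      · rfl
      · split <;> ring

lemma hasDerivAt_jointProb (x : Elem n → ℝ) (v : Elem n) (e : Choice n B) :
    HasDerivAt (fun t => jointProb n B (Function.update x v t) e)
      (∑ s : Slot B, slope n B v s (e s) * restProb n B x s e) (x v) := by
  have hf : ∀ s ∈ (univ : Finset (Slot B)),
      HasDerivAt (fun t => prob n (Function.update x v t) s.1 (e s))
        (slope n B v s (e s)) (x v) := by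
    intro s _
    have := hasDerivAt_prob n x v s.1 (e s) (x v)
    cases h : e s with
    | some m' => rw [h] at this; simpa [slope] using this
    | none => rw [h] at this; simpa [slope] using this
  have h := HasDerivAt.fun_finsetProd hf
  simp only [Function.update_eq_self, smul_eq_mul] at h
  convert h using 1
  · rfl
  · rfl
  · rfl
  refine Finset.sum_congr rfl fun s _ => ?_
  rw [mul_comm]
  rfl

lemma pderiv_ME (f : Finset (Elem n) → ℝ) (x : Elem n → ℝ) (v : Elem n) :
    pderiv n (ME n B f) v x
      = ∑ s : Slot B, ∑ e : Choice n B,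
          f (chosen n B e univ) * (slope n B v s (e s) * restProb n B x s e) := by
  have h : HasDerivAt (fun t => ME n B f (Function.update x v t))
      (∑ e : Choice n B, f (chosen n B e univ)
        * (∑ s : Slot B, slope n B v s (e s) * restProb n B x s e)) (x v) := by
    have := HasDerivAt.fun_sum (u := (univ : Finset (Choice n B)))
      (fun e (_ : e ∈ univ) => (hasDerivAt_jointProb n B x v e).const_mul (f (chosen n B e univ)))
    exact this
  rw [pderiv, h.deriv]
  simp_rw [Finset.mul_sum]
  rw [Finset.sum_comm]

lemma slot_sum_eq (f : Finset (Elem n) → ℝ) (x : Elem n → ℝ) (v : Elem n) (s : Slot B) :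
    ∑ e : Choice n B, f (chosen n B e univ) * (slope n B v s (e s) * restProb n B x s e)
      = if s.1 = v.1 then
          ∑ e : Choice n B, marg n f v (chosen n B e (univ.erase s)) * jointProb n B x e
        else 0 := by
  have hrest : ∀ (e : Choice n B) (o : Option (Fin (n s.1))),
      restProb n B x s (Function.update e s o) = restProb n B x s e := by
    intro e o
    exact Finset.prod_congr rfl fun s' hs' => by
      rw [Function.update_of_ne (Finset.ne_of_mem_erase hs') o e]
  have hkey : ∀ (e : Choice n B), ∀ o,
      chosen n B (Function.update e s o) univ
        = (o.map fun m => (⟨s.1, m⟩ : Elem n)).toFinset ∪ chosen n B e (univ.erase s) := by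
    intro e o
    rw [chosen_split n B _ s, Function.update_self,
      chosen_update n B e (Finset.notMem_erase s univ) o]
  have hjp : ∀ (e : Choice n B) (o : Option (Fin (n s.1))),
      jointProb n B x (Function.update e s o) = prob n x s.1 o * restProb n B x s e := by
    intro e o
    unfold jointProb
    rw [← Finset.mul_prod_erase univ (fun s' => prob n x s'.1 (Function.update e s o s'))
      (Finset.mem_univ s), Function.update_self]
    congr 1
    exact hrest e o
  have main : ∑ e : Choice n B,
        f (chosen n B e univ) * (slope n B v s (e s) * restProb n B x s e)
      = ∑ e ∈ univ.filter (fun e : Choice n B => e s = none), restProb n B x s e *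
          ∑ o : Option (Fin (n s.1)),
            f ((o.map fun m => (⟨s.1, m⟩ : Elem n)).toFinset ∪ chosen n B e (univ.erase s))
              * slope n B v s o := by
    rw [sum_choice_fiber n B s, Finset.sum_comm]
    refine Finset.sum_congr rfl fun e he => ?_
    rw [Finset.mul_sum]
    refine Finset.sum_congr rfl fun o _ => ?_
    rw [hkey e o, Function.update_self, hrest e o]
    ring
  have hinner : ∀ e : Choice n B,
      (∑ o : Option (Fin (n s.1)),
          f ((o.map fun m => (⟨s.1, m⟩ : Elem n)).toFinset ∪ chosen n B e (univ.erase s))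
            * slope n B v s o)
        = if s.1 = v.1 then marg n f v (chosen n B e (univ.erase s)) else 0 := by
    intro e
    rw [Fintype.sum_option]
    by_cases hsv : s.1 = v.1
    · obtain ⟨kv, mv⟩ := v
      replace hsv : s.1 = kv := hsv
      subst hsv
      simp only [slope, Option.map_none, Option.map_some, Option.toFinset_none,
        Option.toFinset_some, Finset.empty_union, if_pos rfl,
        Sigma.mk.inj_iff, heq_eq_eq, true_and, mul_ite, mul_one, mul_zero]
      rw [Finset.sum_ite_eq' univ mv fun m' =>
        f ({(⟨s.1, m'⟩ : Elem n)} ∪ chosen n B e (univ.erase s))]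
      simp [marg]
      ring
    · have hne : ∀ m' : Fin (n s.1), (⟨s.1, m'⟩ : Elem n) ≠ v := fun m' hm =>
        hsv (congrArg Sigma.fst hm)
      simp [slope, hne, hsv]
  by_cases hsv : s.1 = v.1
  · rw [if_pos hsv, main]
    have hrhs : ∑ e : Choice n B, marg n f v (chosen n B e (univ.erase s)) * jointProb n B x e
        = ∑ e ∈ univ.filter (fun e : Choice n B => e s = none),
            restProb n B x s e * marg n f v (chosen n B e (univ.erase s)) := by
      rw [sum_choice_fiber n B s, Finset.sum_comm]
      refine Finset.sum_congr rfl fun e he => ?_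
      calc ∑ o : Option (Fin (n s.1)),
            marg n f v (chosen n B (Function.update e s o) (univ.erase s))
              * jointProb n B x (Function.update e s o)
          = ∑ o : Option (Fin (n s.1)),
              marg n f v (chosen n B e (univ.erase s))
                * (prob n x s.1 o * restProb n B x s e) := by
            refine Finset.sum_congr rfl fun o _ => ?_
            rw [chosen_update n B e (Finset.notMem_erase s univ) o, hjp e o]
        _ = restProb n B x s e * marg n f v (chosen n B e (univ.erase s)) := by
            rw [← Finset.mul_sum, ← Finset.sum_mul, sum_prob, one_mul]
            ring
    rw [hrhs]
    refine Finset.sum_congr rfl fun e he => ?_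
    rw [hinner e, if_pos hsv]
  · rw [if_neg hsv, main]
    refine Finset.sum_eq_zero fun e he => ?_
    rw [hinner e, if_neg hsv, mul_zero]

lemma pderiv_ME' (f : Finset (Elem n) → ℝ) (x : Elem n → ℝ) (v : Elem n) :
    pderiv n (ME n B f) v x
      = ∑ s ∈ univ.filter (fun s : Slot B => s.1 = v.1),
          ∑ e : Choice n B, marg n f v (chosen n B e (univ.erase s)) * jointProb n B x e := by
  rw [pderiv_ME, Finset.sum_filter]
  exact Finset.sum_congr rfl fun s _ => slot_sum_eq n B f x v s

lemma inner_grad (f : Finset (Elem n) → ℝ) (x : Elem n → ℝ) (S : Finset (Elem n)) :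
    inner' n (indVec n B S) (grad n (ME n B f) x)
      = ∑ e : Choice n B, jointProb n B x e *
          ∑ v ∈ S, ((B v.1 : ℝ))⁻¹ *
            ∑ s ∈ univ.filter (fun s : Slot B => s.1 = v.1),
              marg n f v (chosen n B e (univ.erase s)) := by
  unfold inner' grad indVec
  simp_rw [ite_mul, zero_mul]
  rw [Finset.sum_ite_mem univ S, Finset.univ_inter]
  calc ∑ v ∈ S, ((B v.1 : ℝ))⁻¹ * pderiv n (ME n B f) v x
      = ∑ v ∈ S, ∑ e : Choice n B, ((B v.1 : ℝ))⁻¹ *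
          ∑ s ∈ univ.filter (fun s : Slot B => s.1 = v.1),
            marg n f v (chosen n B e (univ.erase s)) * jointProb n B x e := by
        refine Finset.sum_congr rfl fun v _ => ?_
        rw [pderiv_ME', Finset.sum_comm, Finset.mul_sum]
    _ = ∑ e : Choice n B, ∑ v ∈ S, ((B v.1 : ℝ))⁻¹ *
          ∑ s ∈ univ.filter (fun s : Slot B => s.1 = v.1),
            marg n f v (chosen n B e (univ.erase s)) * jointProb n B x e := Finset.sum_comm
    _ = _ := by
        refine Finset.sum_congr rfl fun e _ => ?_
        rw [Finset.mul_sum]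
        refine Finset.sum_congr rfl fun v _ => ?_
        rw [← Finset.sum_mul, Finset.mul_sum, ← Finset.mul_sum]
        ring

/-! ### Set-function lemmas -/

lemma marg_nonneg {f : Finset (Elem n) → ℝ} (hmono : MonotoneSet n f) (v : Elem n)
    (A : Finset (Elem n)) : 0 ≤ marg n f v A :=
  sub_nonneg.2 (hmono _ _ (Finset.subset_insert _ _))

lemma marg_lower {f : Finset (Elem n) → ℝ} (hmono : MonotoneSet n f) {γ : ℝ}
    (hγ0 : 0 < γ) (hbelow : WeaklyBelow n f γ) (v u : Elem n) (A : Finset (Elem n)) :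
    γ * marg n f v (insert u A) - (1 - γ) * (f (insert u A) - f A) ≤ marg n f v A := by
  have hb := hbelow A (insert v (insert u A))
    ((Finset.subset_insert u A).trans (Finset.subset_insert v _))
  have hsub : insert v (insert u A) \ A ⊆ insert v {u} := by
    intro w hw
    simp only [Finset.mem_sdiff, Finset.mem_insert, Finset.mem_singleton] at hw ⊢
    tauto
  have hsum : ∑ w ∈ insert v (insert u A) \ A, marg n f w A
      ≤ marg n f v A + marg n f u A := by
    refine le_trans (Finset.sum_le_sum_of_subset_of_nonneg hsub
      fun w _ _ => marg_nonneg n hmono w A) ?_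
    by_cases hvu : v = u
    · subst hvu
      simp only [Finset.insert_eq_self.2 (Finset.mem_singleton_self v), Finset.sum_singleton]
      exact le_add_of_nonneg_right (marg_nonneg n hmono v A)
    · rw [Finset.sum_insert (by simp [hvu]), Finset.sum_singleton]
  have hkey : f (insert v (insert u A)) = f (insert u A) + marg n f v (insert u A) := by
    rw [marg]; ring
  have hmargu : marg n f u A = f (insert u A) - f A := rfl
  nlinarith [hb, hsum]

lemma sum_marg_lower {f : Finset (Elem n) → ℝ} (hmono : MonotoneSet n f) {γ : ℝ}
    (hγ0 : 0 ≤ γ) (hbelow : WeaklyBelow n f γ) (S R : Finset (Elem n)) :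
    γ * (f S - f R) ≤ ∑ v ∈ S, marg n f v R := by
  have hb := hbelow R (R ∪ S) Finset.subset_union_left
  rw [Finset.union_sdiff_left] at hb
  have h2 : ∑ v ∈ S \ R, marg n f v R ≤ ∑ v ∈ S, marg n f v R :=
    Finset.sum_le_sum_of_subset_of_nonneg Finset.sdiff_subset
      fun w _ _ => marg_nonneg n hmono w R
  have h3 : f S ≤ f (R ∪ S) := hmono _ _ Finset.subset_union_right
  nlinarith [hb, h2, h3, mul_le_mul_of_nonneg_left h3 hγ0]

lemma card_slots (k : Fin K) :
    (univ.filter (fun s : Slot B => s.1 = k)).card = B k := by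
  rw [Finset.card_filter, ← Finset.univ_sigma_univ, Finset.sum_sigma]
  have h : ∀ k' : Fin K, (∑ _b : Fin (B k'), if k' = k then (1 : ℕ) else 0)
      = if k' = k then B k' else 0 := by
    intro k'
    by_cases h : k' = k <;> simp [h]
  calc ∑ k' : Fin K, ∑ b : Fin (B k'), (if (⟨k', b⟩ : Slot B).1 = k then (1 : ℕ) else 0)
      = ∑ k' : Fin K, if k' = k then B k' else 0 :=
        Finset.sum_congr rfl fun k' _ => h k'
    _ = B k := by rw [Finset.sum_ite_eq' univ k fun k' => B k']; simp

lemma sum_gap_le {f : Finset (Elem n) → ℝ} (hf0 : ∀ S, 0 ≤ f S) (hmono : MonotoneSet n f)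
    {β : ℝ} (hβ0 : 0 ≤ β) (habove : WeaklyAbove n f β) (e : Choice n B) :
    ∑ s : Slot B, (f (chosen n B e univ) - f (chosen n B e (univ.erase s)))
      ≤ β * f (chosen n B e univ) := by
  set R := chosen n B e univ with hRdef
  set g : Slot B → Option (Elem n) := fun s => (e s).map (fun m => (⟨s.1, m⟩ : Elem n)) with hgdef
  have hdec : ∀ s : Slot B, R = (g s).toFinset ∪ chosen n B e (univ.erase s) :=
    fun s => chosen_split n B e s
  have hmemR : ∀ s w, g s = some w → w ∈ R := by
    intro s w h
    rw [hdec s, h]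
    simp
  have hsubA : ∀ s w, g s = some w → R.erase w ⊆ chosen n B e (univ.erase s) := by
    intro s w h x hx
    rcases Finset.mem_erase.1 hx with ⟨hxw, hxR⟩
    rw [hdec s, h] at hxR
    simp only [Option.toFinset_some, Finset.mem_union, Finset.mem_singleton] at hxR
    tauto
  have hdup : ∀ s w, g s = some w → w ∈ chosen n B e (univ.erase s) →
      f (chosen n B e (univ.erase s)) = f R := by
    intro s w h hw
    have hRA : R ⊆ chosen n B e (univ.erase s) := by
      rw [hdec s, h]
      simp only [Option.toFinset_some]
      exact Finset.union_subset (Finset.singleton_subset_iff.2 hw) (Finset.Subset.refl _)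
    have hAR : chosen n B e (univ.erase s) ⊆ R :=
      chosen_mono n B e (Finset.erase_subset _ _)
    rw [Finset.Subset.antisymm hAR hRA]
  have hother : ∀ s s' w, s' ≠ s → g s' = some w → w ∈ chosen n B e (univ.erase s) := by
    intro s s' w hne h
    refine Finset.mem_biUnion.2 ⟨s', Finset.mem_erase.2 ⟨hne, Finset.mem_univ _⟩, ?_⟩
    rw [show ((e s').map fun m => (⟨s'.1, m⟩ : Elem n)) = g s' from rfl, h]
    simp
  have hswap1 : ∀ s : Slot B, (f R - f (chosen n B e (univ.erase s)))
      = ∑ w ∈ R, (if g s = some w then f R - f (chosen n B e (univ.erase s)) else 0) := by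
    intro s
    cases h : g s with
    | none =>
        have hnone : R = chosen n B e (univ.erase s) := by rw [hdec s, h]; simp
        rw [← hnone]
        simp [h]
    | some w =>
        have hwR := hmemR s w h
        simp only [h, Option.some.injEq]
        rw [Finset.sum_ite_eq R w (fun _ => f R - f (chosen n B e (univ.erase s))), if_pos hwR]
  have hbound : ∀ w ∈ R,
      (∑ s : Slot B, if g s = some w then f R - f (chosen n B e (univ.erase s)) else 0)
        ≤ marg n f w (R.erase w) := by
    intro w hwR
    rw [← Finset.sum_filter]
    set P := univ.filter (fun s : Slot B => g s = some w) with hPdef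
    by_cases hex : ∃ s₁ ∈ P, ∃ s₂ ∈ P, s₁ ≠ s₂
    · obtain ⟨s₁, hs₁, s₂, hs₂, hne⟩ := hex
      have hz : ∀ s ∈ P, f R - f (chosen n B e (univ.erase s)) = 0 := by
        intro s hs
        have hgs : g s = some w := (Finset.mem_filter.1 hs).2
        have hex' : ∃ s' ∈ P, s' ≠ s := by
          by_cases h1 : s₁ = s
          · exact ⟨s₂, hs₂, fun hc => hne (h1.trans hc.symm)⟩
          · exact ⟨s₁, hs₁, h1⟩
        obtain ⟨s', hs', hne'⟩ := hex'
        have hw' := hother s s' w hne' (Finset.mem_filter.1 hs').2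
        rw [hdup s w hgs hw']
        ring
      rw [Finset.sum_eq_zero hz]
      exact marg_nonneg n hmono w _
    · push_neg at hex
      have hcard : P.card ≤ 1 := Finset.card_le_one.2 hex
      have hmnn := marg_nonneg n hmono w (R.erase w)
      have hle : ∀ s ∈ P, f R - f (chosen n B e (univ.erase s)) ≤ marg n f w (R.erase w) := by
        intro s hs
        have hgs : g s = some w := (Finset.mem_filter.1 hs).2
        have h1 : f (R.erase w) ≤ f (chosen n B e (univ.erase s)) := hmono _ _ (hsubA s w hgs)
        have h2 : marg n f w (R.erase w) = f R - f (R.erase w) := by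
          rw [marg, Finset.insert_erase hwR]
        linarith
      calc ∑ s ∈ P, (f R - f (chosen n B e (univ.erase s)))
          ≤ P.card • marg n f w (R.erase w) := Finset.sum_le_card_nsmul P _ _ hle
        _ = (P.card : ℝ) * marg n f w (R.erase w) := nsmul_eq_mul _ _
        _ ≤ 1 * marg n f w (R.erase w) :=
            mul_le_mul_of_nonneg_right (by exact_mod_cast hcard) hmnn
        _ = marg n f w (R.erase w) := one_mul _
  have habv := habove ∅ R (Finset.empty_subset R)
  rw [Finset.sdiff_empty] at habv
  calc ∑ s : Slot B, (f R - f (chosen n B e (univ.erase s)))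
      = ∑ s : Slot B, ∑ w ∈ R,
          (if g s = some w then f R - f (chosen n B e (univ.erase s)) else 0) :=
        Finset.sum_congr rfl fun s _ => hswap1 s
    _ = ∑ w ∈ R, ∑ s : Slot B,
          (if g s = some w then f R - f (chosen n B e (univ.erase s)) else 0) :=
        Finset.sum_comm
    _ ≤ ∑ w ∈ R, marg n f w (R.erase w) := Finset.sum_le_sum hbound
    _ ≤ β * (f R - f ∅) := habv
    _ ≤ β * f R := by nlinarith [hf0 ∅]

lemma pointwise_bound {f : Finset (Elem n) → ℝ} (hf0 : ∀ S, 0 ≤ f S)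
    (hmono : MonotoneSet n f) {γ β : ℝ} (hγ0 : 0 < γ) (hγ1 : γ ≤ 1) (hβ : 1 ≤ β)
    (hbelow : WeaklyBelow n f γ) (habove : WeaklyAbove n f β) (hB : ∀ k, 0 < B k)
    (S : Finset (Elem n)) (hS : Feasible n B S) (e : Choice n B) :
    γ ^ 2 * f S - (β * (1 - γ) + γ ^ 2) * f (chosen n B e univ) ≤
      ∑ v ∈ S, ((B v.1 : ℝ))⁻¹ *
        ∑ s ∈ univ.filter (fun s : Slot B => s.1 = v.1),
          marg n f v (chosen n B e (univ.erase s)) := by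
  set R := chosen n B e univ with hRdef
  set A : Slot B → Finset (Elem n) := fun s => chosen n B e (univ.erase s) with hAdef
  have hAR : ∀ s, A s ⊆ R := fun s => chosen_mono n B e (Finset.erase_subset _ _)
  have hcase : ∀ s : Slot B, A s = R ∨ ∃ w : Elem n, R = insert w (A s) := by
    intro s
    have hdec : R = ((e s).map fun m => (⟨s.1, m⟩ : Elem n)).toFinset ∪ A s :=
      chosen_split n B e s
    cases h : e s with
    | none => left; rw [hdec, h]; simp
    | some m' =>
        right
        exact ⟨⟨s.1, m'⟩, by rw [hdec, h]; simp⟩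
  have hstepa : ∀ (v : Elem n) (s : Slot B),
      γ * marg n f v R - (1 - γ) * (f R - f (A s)) ≤ marg n f v (A s) := by
    intro v s
    rcases hcase s with h | ⟨w, hw⟩
    · rw [h]
      nlinarith [marg_nonneg n hmono v R]
    · rw [hw]
      exact marg_lower n hmono hγ0 hbelow v w (A s)
  have hBpos : ∀ k, (0 : ℝ) < (B k : ℝ) := fun k => by exact_mod_cast hB k
  have h1 : ∀ v ∈ S,
      γ * marg n f v R - (1 - γ) * (((B v.1 : ℝ))⁻¹ *
          ∑ s ∈ univ.filter (fun s : Slot B => s.1 = v.1), (f R - f (A s)))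
        ≤ ((B v.1 : ℝ))⁻¹ *
            ∑ s ∈ univ.filter (fun s : Slot B => s.1 = v.1), marg n f v (A s) := by
    intro v _
    have hpos := hBpos v.1
    calc γ * marg n f v R - (1 - γ) * (((B v.1 : ℝ))⁻¹ *
            ∑ s ∈ univ.filter (fun s : Slot B => s.1 = v.1), (f R - f (A s)))
        = ((B v.1 : ℝ))⁻¹ * ∑ s ∈ univ.filter (fun s : Slot B => s.1 = v.1),
            (γ * marg n f v R - (1 - γ) * (f R - f (A s))) := by
          simp only [Finset.sum_sub_distrib, Finset.sum_const, card_slots B v.1,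
            nsmul_eq_mul, ← Finset.mul_sum]
          field_simp
      _ ≤ _ := mul_le_mul_of_nonneg_left
          (Finset.sum_le_sum fun s _ => hstepa v s) (inv_nonneg.2 hpos.le)
  have h2 := Finset.sum_le_sum h1
  rw [Finset.sum_sub_distrib, ← Finset.mul_sum, ← Finset.mul_sum] at h2
  have h3 : ∑ v ∈ S, ((B v.1 : ℝ))⁻¹ *
        ∑ s ∈ univ.filter (fun s : Slot B => s.1 = v.1), (f R - f (A s))
      ≤ ∑ s : Slot B, (f R - f (A s)) := by
    have hgnn : ∀ k : Fin K, 0 ≤ ((B k : ℝ))⁻¹ *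
        ∑ s ∈ univ.filter (fun s : Slot B => s.1 = k), (f R - f (A s)) :=
      fun k => mul_nonneg (inv_nonneg.2 (hBpos k).le)
        (Finset.sum_nonneg fun s _ => sub_nonneg.2 (hmono _ _ (hAR s)))
    calc ∑ v ∈ S, ((B v.1 : ℝ))⁻¹ *
          ∑ s ∈ univ.filter (fun s : Slot B => s.1 = v.1), (f R - f (A s))
        = ∑ k : Fin K, ((S.filter (fun v => v.1 = k)).card : ℝ) * (((B k : ℝ))⁻¹ *
            ∑ s ∈ univ.filter (fun s : Slot B => s.1 = k), (f R - f (A s))) := by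
          rw [← Finset.sum_fiberwise_of_maps_to (fun v (_ : v ∈ S) => Finset.mem_univ v.1)
            (fun v => ((B v.1 : ℝ))⁻¹ *
              ∑ s ∈ univ.filter (fun s : Slot B => s.1 = v.1), (f R - f (A s)))]
          refine Finset.sum_congr rfl fun k _ => ?_
          have hcongr : ∀ v ∈ S.filter (fun v => v.1 = k),
              ((B v.1 : ℝ))⁻¹ *
                  ∑ s ∈ univ.filter (fun s : Slot B => s.1 = v.1), (f R - f (A s))
                = ((B k : ℝ))⁻¹ *
                    ∑ s ∈ univ.filter (fun s : Slot B => s.1 = k), (f R - f (A s)) :=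
            fun v hv => by rw [(Finset.mem_filter.1 hv).2]
          rw [Finset.sum_congr rfl hcongr, Finset.sum_const, nsmul_eq_mul]
      _ ≤ ∑ k : Fin K, (B k : ℝ) * (((B k : ℝ))⁻¹ *
            ∑ s ∈ univ.filter (fun s : Slot B => s.1 = k), (f R - f (A s))) :=
          Finset.sum_le_sum fun k _ =>
            mul_le_mul_of_nonneg_right (by exact_mod_cast hS k) (hgnn k)
      _ = ∑ k : Fin K, ∑ s ∈ univ.filter (fun s : Slot B => s.1 = k), (f R - f (A s)) :=
          Finset.sum_congr rfl fun k _ => by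
            rw [← mul_assoc, mul_inv_cancel₀ (ne_of_gt (hBpos k)), one_mul]
      _ = ∑ s : Slot B, (f R - f (A s)) :=
          Finset.sum_fiberwise univ (fun s : Slot B => s.1) fun s => f R - f (A s)
  have h4 : ∑ s : Slot B, (f R - f (A s)) ≤ β * f R :=
    sum_gap_le n B hf0 hmono (by linarith) habove e
  have h5 := sum_marg_lower n hmono hγ0.le hbelow S R
  have h6 : (1 - γ) * (∑ v ∈ S, ((B v.1 : ℝ))⁻¹ *
        ∑ s ∈ univ.filter (fun s : Slot B => s.1 = v.1), (f R - f (A s)))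
      ≤ (1 - γ) * (β * f R) :=
    mul_le_mul_of_nonneg_left (h3.trans h4) (by linarith)
  have h7 := mul_le_mul_of_nonneg_left h5 hγ0.le
  nlinarith [h2, h6, h7]
theorem multinoulliExtension_weaklySub_gap_bound {K : ℕ} (n B : Fin K → ℕ) (hn : ∀ k, 1 ≤ n k)
    (hB : ∀ k, 0 < B k) (hBn : ∀ k, B k ≤ n k)
    (f : Finset (Elem n) → ℝ) (hf0 : ∀ S, 0 ≤ f S)
    (hmono : MonotoneSet n f)
    (γ β : ℝ) (hγ0 : 0 < γ) (hγ1 : γ ≤ 1) (hβ : 1 ≤ β)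
    (hbelow : WeaklyBelow n f γ) (habove : WeaklyAbove n f β)
    (S : Finset (Elem n)) (hS : Feasible n B S)
    (x : Elem n → ℝ) (hx : InSimplex n x) :
    γ ^ 2 * f S - (β * (1 - γ) + γ ^ 2) * ME n B f x ≤
      inner' n (indVec n B S) (grad n (ME n B f) x) := by
  rw [inner_grad n B f x S]
  have h1 := sum_jointProb n B x
  have hpt : ∀ e : Choice n B,
      γ ^ 2 * f S - (β * (1 - γ) + γ ^ 2) * f (chosen n B e univ) ≤
        ∑ v ∈ S, ((B v.1 : ℝ))⁻¹ *
          ∑ s ∈ univ.filter (fun s : Slot B => s.1 = v.1),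
            marg n f v (chosen n B e (univ.erase s)) :=
    fun e => pointwise_bound n B hf0 hmono hγ0 hγ1 hβ hbelow habove hB S hS e
  calc γ ^ 2 * f S - (β * (1 - γ) + γ ^ 2) * ME n B f x
      = ∑ e : Choice n B, jointProb n B x e *
          (γ ^ 2 * f S - (β * (1 - γ) + γ ^ 2) * f (chosen n B e univ)) := by
        have hexp : ∀ e : Choice n B, jointProb n B x e *
            (γ ^ 2 * f S - (β * (1 - γ) + γ ^ 2) * f (chosen n B e univ))
          = (γ ^ 2 * f S) * jointProb n B x e
            - (β * (1 - γ) + γ ^ 2) * (f (chosen n B e univ) * jointProb n B x e) :=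
          fun e => by ring
        rw [Finset.sum_congr rfl fun e (_ : e ∈ univ) => hexp e, Finset.sum_sub_distrib,
          ← Finset.mul_sum, ← Finset.mul_sum, h1, mul_one, ME]
    _ ≤ ∑ e : Choice n B, jointProb n B x e *
          (∑ v ∈ S, ((B v.1 : ℝ))⁻¹ *
            ∑ s ∈ univ.filter (fun s : Slot B => s.1 = v.1),
              marg n f v (chosen n B e (univ.erase s))) :=
        Finset.sum_le_sum fun e _ =>
          mul_le_mul_of_nonneg_left (hpt e) (jointProb_nonneg n B hx e)

end Multinoulli
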